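/- arXiv:2605.02530 — 8 statements merged into one kernel-verified Lean document; each statement's English description precedes it below -/
import Mathlib

section
/- Let a ∈ ℂ with a ≠ 1 and a ≠ −1. Then the quotient ℂ-vector space V = (L × L)/range(T) has dimension exactly 3 over ℂ, with basis given by the classes ω₀ = [X⁻¹·u], ω₁ = [X⁻¹], ω₂ = [1]. -/
open LaurentPolynomial

/-- The linear map `T(f,g) = (p * D g + w * g, D f)` on `L × L`, encoding the distinguished
derivation of the superelliptic algebra (even part `L`, odd part `L * u`), where `p = P`
and `w` is the odd-weight term `u * u' = P'/2`. -/
noncomputable def Tgen (p w : LaurentPolynomial ℂ)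
    (D : LaurentPolynomial ℂ →ₗ[ℂ] LaurentPolynomial ℂ) :
    (LaurentPolynomial ℂ × LaurentPolynomial ℂ) →ₗ[ℂ]
      (LaurentPolynomial ℂ × LaurentPolynomial ℂ) where
  toFun fg := (p * D fg.2 + w * fg.2, D fg.1)
  map_add' x y := by
    ext
    · simp only [Prod.fst_add, Prod.snd_add, map_add]
      ring_nf
    · simp [Prod.snd_add]
  map_smul' c x := by
    ext
    · simp only [Prod.smul_fst, Prod.smul_snd, map_smul, smul_add, mul_smul_comm,
        RingHom.id_apply]
    · simp

/-- The derivation map for the quadratic curve: `P = X^2 - 2aX + 1`, `P'/2 = X - a`. -/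
noncomputable def Tquad (a : ℂ)
    (D : LaurentPolynomial ℂ →ₗ[ℂ] LaurentPolynomial ℂ) :
    (LaurentPolynomial ℂ × LaurentPolynomial ℂ) →ₗ[ℂ]
      (LaurentPolynomial ℂ × LaurentPolynomial ℂ) :=
  Tgen (T 2 - 2 * C a * T 1 + 1) (T 1 - C a) D

/-! ### Auxiliary development -/

abbrev LL := LaurentPolynomial ℂ

/-- Legendre-type sequence: `leg a n = P_n(a)`. -/
noncomputable def leg (a : ℂ) : ℕ → ℂ
  | 0 => 1
  | 1 => a
  | n+2 => (a*(2*(n:ℂ)+3)*leg a (n+1) - ((n:ℂ)+1)*leg a n)/((n:ℂ)+2)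

noncomputable def c1 (a : ℂ) (n : ℤ) : ℂ := if 0 ≤ n then leg a n.toNat else 0
noncomputable def c2 (a : ℂ) (n : ℤ) : ℂ := c1 a (-1-n)
noncomputable def c0 (n : ℤ) : ℂ := if n = -1 then 1 else 0

lemma rec_c1 (a : ℂ) (n : ℤ) :
    ((n:ℂ)+1) * c1 a (n+1) - a*(2*(n:ℂ)+1) * c1 a n + (n:ℂ) * c1 a (n-1) = 0 := by
  rcases lt_trichotomy n 0 with h | rfl | h
  · have e1 : c1 a n = 0 := if_neg (by omega)
    have e2 : c1 a (n-1) = 0 := if_neg (by omega)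
    rw [e1, e2]
    rcases eq_or_ne n (-1) with rfl | hne
    · push_cast; ring
    · have e3 : c1 a (n+1) = 0 := if_neg (by omega)
      rw [e3]; ring
  · have e0 : c1 a 0 = 1 := by simp [c1, leg]
    have e1 : c1 a 1 = a := by simp [c1, leg]
    have e2 : c1 a (-1) = 0 := if_neg (by omega)
    rw [show (0:ℤ)+1 = 1 from rfl, show (0:ℤ)-1 = -1 from rfl, e0, e1, e2]
    push_cast; ring
  · obtain ⟨m, rfl⟩ : ∃ m : ℕ, n = (m:ℤ)+1 := ⟨(n-1).toNat, by omega⟩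
    have e1 : c1 a ((m:ℤ)+1+1) = leg a (m+2) := by
      rw [c1, if_pos (by omega), show ((m:ℤ)+1+1).toNat = m+2 from by omega]
    have e2 : c1 a ((m:ℤ)+1) = leg a (m+1) := by
      rw [c1, if_pos (by omega), show ((m:ℤ)+1).toNat = m+1 from by omega]
    have e3 : c1 a ((m:ℤ)+1-1) = leg a m := by
      rw [c1, if_pos (by omega), show ((m:ℤ)+1-1).toNat = m from by omega]
    rw [e1, e2, e3, leg]
    have hne : ((m:ℂ)+2) ≠ 0 := by
      have := Nat.cast_ne_zero (R := ℂ).mpr (show m+2 ≠ 0 by omega)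
      push_cast at this; exact this
    push_cast
    field_simp
    ring

lemma rec_c2 (a : ℂ) (n : ℤ) :
    ((n:ℂ)+1) * c2 a (n+1) - a*(2*(n:ℂ)+1) * c2 a n + (n:ℂ) * c2 a (n-1) = 0 := by
  have h := rec_c1 a (-1-n)
  simp only [c2]
  rw [show (-1-(n+1) : ℤ) = -1-n-1 from by ring, show (-1-(n-1) : ℤ) = -1-n+1 from by ring]
  push_cast at h ⊢
  linear_combination -h

noncomputable def Lam (c : ℤ → ℂ) : LL →ₗ[ℂ] ℂ :=
  Finsupp.linearCombination ℂ c ∘ₗ (AddMonoidAlgebra.coeffLinearEquiv ℂ).toLinearMap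

lemma Lam_T (c : ℤ → ℂ) (n : ℤ) : Lam c (T n) = c n := by
  rw [Lam, LaurentPolynomial.T]
  show Finsupp.linearCombination ℂ c (Finsupp.single n 1) = c n
  erw [Finsupp.linearCombination_single]
  rw [one_smul]

lemma Lam_one (c : ℤ → ℂ) : Lam c 1 = c 0 := by rw [← T_zero, Lam_T]

lemma smulC (a : ℂ) (f : LL) : C a * f = a • f := by
  rw [C_eq_algebraMap, ← Algebra.smul_def]

noncomputable def Emap (a : ℂ) (D : LL →ₗ[ℂ] LL) : LL →ₗ[ℂ] LL where
  toFun g := (T 2 - 2*C a*T 1 + 1) * D g + (T 1 - C a) * g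
  map_add' p q := by rw [map_add]; ring
  map_smul' r p := by
    simp only [map_smul, RingHom.id_apply, smul_add, mul_smul_comm, smul_mul_assoc]

lemma Emap_T (a : ℂ) (D : LL →ₗ[ℂ] LL) (hD : ∀ n : ℤ, D (T n) = (n : ℂ) • T (n - 1))
    (n : ℤ) : Emap a D (T n)
      = ((n:ℂ)+1) • T (n+1) - (a*(2*(n:ℂ)+1)) • T n + (n:ℂ) • T (n-1) := by
  show (T 2 - 2*C a*T 1 + 1) * D (T n) + (T 1 - C a) * T n = _
  rw [hD n]
  have h2 : (T 2 : LL) * T (n-1) = T (n+1) := by rw [← T_add]; congr 1; ring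
  have h1 : (2*C a*T 1 : LL) * T (n-1) = (2*a) • T n := by
    rw [mul_assoc, ← T_add, show (1+(n-1) : ℤ) = n from by ring, mul_assoc,
      smulC, (map_ofNat C 2).symm, smulC]
    rw [smul_smul]
  have h3 : (T 1 : LL) * T n = T (n+1) := by rw [← T_add]; congr 1; ring
  have h4 : (C a : LL) * T n = a • T n := smulC a _
  rw [mul_smul_comm, add_mul, sub_mul, sub_mul, one_mul, h2, h1, h3, h4]
  module

lemma ann (a : ℂ) (D : LL →ₗ[ℂ] LL) (hD : ∀ n : ℤ, D (T n) = (n : ℂ) • T (n - 1))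
    (c : ℤ → ℂ)
    (hc : ∀ n : ℤ, ((n:ℂ)+1) * c (n+1) - a*(2*(n:ℂ)+1) * c n + (n:ℂ) * c (n-1) = 0)
    (g : LL) : Lam c (Emap a D g) = 0 := by
  induction g using LaurentPolynomial.induction_on' with
  | add p q hp hq => rw [map_add, map_add, hp, hq, add_zero]
  | C_mul_T n r =>
    rw [smulC, map_smul, map_smul, Emap_T a D hD, map_add, map_sub, map_smul, map_smul,
      map_smul, Lam_T, Lam_T, Lam_T, smul_eq_mul]
    simp only [smul_eq_mul]
    rw [show ((n:ℂ)+1) * c (n+1) - a*(2*(n:ℂ)+1) * c n + (n:ℂ) * c (n-1) = 0 from hc n]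
    simp

lemma resD (D : LL →ₗ[ℂ] LL) (hD : ∀ n : ℤ, D (T n) = (n : ℂ) • T (n - 1)) (f : LL) :
    Lam c0 (D f) = 0 := by
  induction f using LaurentPolynomial.induction_on' with
  | add p q hp hq => rw [map_add, map_add, hp, hq, add_zero]
  | C_mul_T n r =>
    rw [smulC, map_smul, map_smul, hD n, map_smul, Lam_T, smul_eq_mul, smul_eq_mul]
    rcases eq_or_ne n 0 with rfl | hne
    · simp
    · rw [show c0 (n-1) = 0 from if_neg (by omega)]; ring

noncomputable def Wsub (a : ℂ) (D : LL →ₗ[ℂ] LL) : Submodule ℂ (LL × LL) :=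
  LinearMap.range (Tquad a D)

lemma Tquad_apply (a : ℂ) (D : LL →ₗ[ℂ] LL) (f g : LL) :
    Tquad a D (f, g) = ((T 2 - 2*C a*T 1 + 1) * D g + (T 1 - C a) * g, D f) := rfl

lemma memW_E (a : ℂ) (D : LL →ₗ[ℂ] LL) (g : LL) : (Emap a D g, (0:LL)) ∈ Wsub a D :=
  ⟨(0, g), by rw [Tquad_apply]; simp [Emap]⟩

lemma memW_snd (a : ℂ) (D : LL →ₗ[ℂ] LL) (hD : ∀ n : ℤ, D (T n) = (n : ℂ) • T (n - 1))
    (n : ℤ) (h : n ≠ -1) : ((0 : LL), T n) ∈ Wsub a D := by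
  refine ⟨(((n:ℂ)+1)⁻¹ • T (n+1), 0), ?_⟩
  have hne : ((n:ℂ)+1) ≠ 0 := by
    have : ((n+1 : ℤ) : ℂ) ≠ 0 := Int.cast_ne_zero.mpr (by omega)
    push_cast at this; exact this
  rw [Tquad_apply]
  rw [map_zero, map_smul, hD (n+1), show (n+1-1 : ℤ) = n from by ring]
  ext
  · simp
  · simp [smul_smul, inv_mul_cancel₀ hne]
lemma memW_pos (a : ℂ) (D : LL →ₗ[ℂ] LL) (hD : ∀ n : ℤ, D (T n) = (n : ℂ) • T (n - 1)) :
    ∀ n : ℕ, ((T (n:ℤ) - leg a n • 1, (0:LL)) ∈ Wsub a D) := by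
  suffices H : ∀ n : ℕ, ((T (n:ℤ) - leg a n • 1, (0:LL)) ∈ Wsub a D) ∧
      ((T ((n:ℤ)+1) - leg a (n+1) • 1, (0:LL)) ∈ Wsub a D) from fun n => (H n).1
  intro n
  induction n with
  | zero =>
    constructor
    · have : (T ((0:ℕ):ℤ) - leg a 0 • (1:LL), (0:LL)) = 0 := by simp [leg]
      rw [this]; exact zero_mem _
    · have e : Emap a D (T 0) = T ((0:ℕ)+1 : ℤ) - leg a (0+1) • (1:LL) := by
        rw [Emap_T a D hD 0, leg]
        push_cast
        simp only [zero_add, zero_smul, add_zero, one_smul, T_zero]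
        module
      have h := memW_E a D (T 0)
      rw [e] at h
      exact_mod_cast h
  | succ n ih =>
    refine ⟨ih.2, ?_⟩
    have hne : ((n:ℂ)+2) ≠ 0 := by
      have := Nat.cast_ne_zero (R := ℂ).mpr (show n+2 ≠ 0 by omega)
      push_cast at this; exact this
    have key : ((n:ℂ)+2) • (T ((n:ℤ)+2) - leg a (n+2) • (1:LL))
        = Emap a D (T ((n:ℤ)+1)) + (a*(2*(n:ℂ)+3)) • (T ((n:ℤ)+1) - leg a (n+1) • 1)
          - ((n:ℂ)+1) • (T (n:ℤ) - leg a n • 1) := by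
      rw [Emap_T a D hD, leg,
        show ((n:ℤ)+1)+1 = (n:ℤ)+2 from by ring, show ((n:ℤ)+1)-1 = (n:ℤ) from by ring]
      push_cast
      match_scalars <;> field_simp <;> ring
    have key2 : ((n:ℂ)+2) • ((T ((n:ℤ)+2) - leg a (n+2) • 1, (0:LL)))
        = (Emap a D (T ((n:ℤ)+1)), (0:LL))
          + (a*(2*(n:ℂ)+3)) • (T ((n:ℤ)+1) - leg a (n+1) • 1, (0:LL))
          - ((n:ℂ)+1) • (T (n:ℤ) - leg a n • 1, (0:LL)) := by
      rw [Prod.ext_iff]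
      constructor
      · simpa using key
      · simp
    have mem : ((n:ℂ)+2) • ((T ((n:ℤ)+2) - leg a (n+2) • 1, (0:LL))) ∈ Wsub a D := by
      rw [key2]
      exact sub_mem (add_mem (memW_E a D _) (Submodule.smul_mem _ _ ih.2))
        (Submodule.smul_mem _ _ ih.1)
    have := (Wsub a D).smul_mem (((n:ℂ)+2)⁻¹) mem
    rw [smul_smul, inv_mul_cancel₀ hne, one_smul] at this
    have ecast : ((n+1:ℕ):ℤ)+1 = (n:ℤ)+2 := by push_cast; ring
    rw [ecast, show n+1+1 = n+2 from rfl]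
    exact this
lemma memW_neg (a : ℂ) (D : LL →ₗ[ℂ] LL) (hD : ∀ n : ℤ, D (T n) = (n : ℂ) • T (n - 1)) :
    ∀ n : ℕ, ((T (-1-(n:ℤ)) - leg a n • T (-1), (0:LL)) ∈ Wsub a D) := by
  suffices H : ∀ n : ℕ, ((T (-1-(n:ℤ)) - leg a n • T (-1), (0:LL)) ∈ Wsub a D) ∧
      ((T (-1-((n:ℤ)+1)) - leg a (n+1) • T (-1), (0:LL)) ∈ Wsub a D) from fun n => (H n).1
  intro n
  induction n with
  | zero =>
    constructor
    · have : (T (-1-((0:ℕ):ℤ)) - leg a 0 • T (-1), (0:LL)) = (0 : LL × LL) := by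
        simp [leg]
      rw [this]; exact zero_mem _
    · have e : (T (-1-(((0:ℕ):ℤ)+1)) - leg a (0+1) • T (-1), (0:LL))
          = -(Emap a D (T (-1)), (0:LL)) := by
        rw [Prod.ext_iff]
        refine ⟨?_, by simp⟩
        simp only [Prod.fst_neg]
        rw [Emap_T a D hD (-1), leg]
        norm_num
        match_scalars <;> ring
      rw [e]
      exact neg_mem (memW_E a D _)
  | succ n ih =>
    refine ⟨ih.2, ?_⟩
    have hne : ((n:ℂ)+2) ≠ 0 := by
      have := Nat.cast_ne_zero (R := ℂ).mpr (show n+2 ≠ 0 by omega)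
      push_cast at this; exact this
    have key : ((n:ℂ)+2) • (T (-1-((n:ℤ)+2)) - leg a (n+2) • T (-1))
        = -(Emap a D (T (-2-(n:ℤ))))
          + (a*(2*(n:ℂ)+3)) • (T (-1-((n:ℤ)+1)) - leg a (n+1) • T (-1))
          - ((n:ℂ)+1) • (T (-1-(n:ℤ)) - leg a n • T (-1)) := by
      rw [Emap_T a D hD, leg,
        show (-2-(n:ℤ))+1 = -1-(n:ℤ) from by ring,
        show (-2-(n:ℤ))-1 = -1-((n:ℤ)+2) from by ring,
        show (-2-(n:ℤ)) = -1-((n:ℤ)+1) from by ring]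
      push_cast
      match_scalars <;> field_simp <;> ring
    have key2 : ((n:ℂ)+2) • ((T (-1-((n:ℤ)+2)) - leg a (n+2) • T (-1), (0:LL)))
        = -(Emap a D (T (-2-(n:ℤ))), (0:LL))
          + (a*(2*(n:ℂ)+3)) • (T (-1-((n:ℤ)+1)) - leg a (n+1) • T (-1), (0:LL))
          - ((n:ℂ)+1) • (T (-1-(n:ℤ)) - leg a n • T (-1), (0:LL)) := by
      rw [Prod.ext_iff]
      constructor
      · simpa using key
      · simp
    have mem : ((n:ℂ)+2) • ((T (-1-((n:ℤ)+2)) - leg a (n+2) • T (-1), (0:LL))) ∈ Wsub a D := by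
      rw [key2]
      exact sub_mem (add_mem (neg_mem (memW_E a D _)) (Submodule.smul_mem _ _ ih.2))
        (Submodule.smul_mem _ _ ih.1)
    have := (Wsub a D).smul_mem (((n:ℂ)+2)⁻¹) mem
    rw [smul_smul, inv_mul_cancel₀ hne, one_smul] at this
    have ecast : -1-(((n+1:ℕ)):ℤ)-1 = -1-((n:ℤ)+2) := by push_cast; ring
    rw [show (-1:ℤ)-((n+1:ℕ):ℤ)-1 = -1-(((n+1:ℕ):ℤ)+1) from by ring] at ecast
    rw [show ((n+1:ℕ):ℤ)+1 = (n:ℤ)+2 from by push_cast; ring, show n+1+1 = n+2 from rfl]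
    exact this

lemma memW_int (a : ℂ) (D : LL →ₗ[ℂ] LL) (hD : ∀ n : ℤ, D (T n) = (n : ℂ) • T (n - 1))
    (n : ℤ) : (T n - c2 a n • T (-1) - c1 a n • 1, (0:LL)) ∈ Wsub a D := by
  rcases le_or_gt 0 n with h | h
  · have h2 : c2 a n = 0 := if_neg (by omega)
    have h1 : c1 a n = leg a n.toNat := if_pos h
    have := memW_pos a D hD n.toNat
    rw [show ((n.toNat:ℕ):ℤ) = n from by omega] at this
    rw [h1, h2, zero_smul, sub_zero]
    exact this
  · have h1 : c1 a n = 0 := if_neg (by omega)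
    have h2 : c2 a n = leg a (-1-n).toNat := by
      rw [c2, c1, if_pos (by omega)]
    have := memW_neg a D hD (-1-n).toNat
    rw [show (-1-(((-1-n).toNat:ℕ):ℤ)) = n from by omega] at this
    rw [h1, h2, zero_smul, sub_zero]
    exact this

lemma claimA (a : ℂ) (D : LL →ₗ[ℂ] LL) (hD : ∀ n : ℤ, D (T n) = (n : ℂ) • T (n - 1))
    (f : LL) :
    (f - Lam (c2 a) f • T (-1) - Lam (c1 a) f • 1, (0:LL)) ∈ Wsub a D := by
  induction f using LaurentPolynomial.induction_on' with
  | add p q hp hq =>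
    have := add_mem hp hq
    convert this using 1
    rw [Prod.ext_iff]
    constructor
    · simp only [map_add, Prod.fst_add]
      module
    · simp
  | C_mul_T n r =>
    have base := (Wsub a D).smul_mem r (memW_int a D hD n)
    convert base using 1
    rw [Prod.ext_iff]
    constructor
    · simp only [smulC, map_smul, Prod.smul_fst, Lam_T, smul_eq_mul]
      rw [smul_sub, smul_sub, smul_smul, smul_smul]
    · simp

lemma claimB (a : ℂ) (D : LL →ₗ[ℂ] LL) (hD : ∀ n : ℤ, D (T n) = (n : ℂ) • T (n - 1))
    (g : LL) :
    ((0:LL), g - Lam c0 g • T (-1)) ∈ Wsub a D := by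
  induction g using LaurentPolynomial.induction_on' with
  | add p q hp hq =>
    have := add_mem hp hq
    convert this using 1
    rw [Prod.ext_iff]
    constructor
    · simp
    · simp only [map_add, Prod.snd_add]
      module
  | C_mul_T n r =>
    rcases eq_or_ne n (-1) with rfl | hne
    · have : ((0:LL), C r * T (-1) - Lam c0 (C r * T (-1)) • T (-1)) = 0 := by
        rw [Prod.ext_iff]
        constructor
        · simp
        · simp only [smulC, map_smul, Lam_T, smul_eq_mul]
          rw [show c0 (-1) = 1 from if_pos rfl]
          simp
      rw [this]; exact zero_mem _
    · have base := (Wsub a D).smul_mem r (memW_snd a D hD n hne)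
      convert base using 1
      rw [Prod.ext_iff]
      constructor
      · simp
      · simp only [smulC, map_smul, Lam_T, smul_eq_mul]
        rw [show c0 n = 0 from if_neg hne]
        simp

noncomputable def phi (a : ℂ) : (LL × LL) →ₗ[ℂ] (Fin 3 → ℂ) :=
  LinearMap.pi ![(Lam c0).comp (LinearMap.snd ℂ LL LL),
    (Lam (c2 a)).comp (LinearMap.fst ℂ LL LL),
    (Lam (c1 a)).comp (LinearMap.fst ℂ LL LL)]

lemma phi_apply0 (a : ℂ) (x : LL × LL) : phi a x 0 = Lam c0 x.2 := rfl
lemma phi_apply1 (a : ℂ) (x : LL × LL) : phi a x 1 = Lam (c2 a) x.1 := rfl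
lemma phi_apply2 (a : ℂ) (x : LL × LL) : phi a x 2 = Lam (c1 a) x.1 := rfl

lemma hker (a : ℂ) (D : LL →ₗ[ℂ] LL) (hD : ∀ n : ℤ, D (T n) = (n : ℂ) • T (n - 1)) :
    Wsub a D ≤ LinearMap.ker (phi a) := by
  rintro x ⟨⟨f, g⟩, rfl⟩
  rw [LinearMap.mem_ker]
  funext i
  fin_cases i
  · exact resD D hD f
  · exact ann a D hD _ (rec_c2 a) g
  · exact ann a D hD _ (rec_c1 a) g

noncomputable def psi (a : ℂ) (D : LL →ₗ[ℂ] LL) :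
    (Fin 3 → ℂ) →ₗ[ℂ] ((LL × LL) ⧸ Wsub a D) where
  toFun v := (Wsub a D).mkQ
    (v 0 • ((0:LL), T (-1)) + v 1 • (T (-1), (0:LL)) + v 2 • ((1:LL), (0:LL)))
  map_add' u v := by
    rw [← map_add]
    congr 1
    simp only [Pi.add_apply, add_smul]
    module
  map_smul' r v := by
    dsimp only [RingHom.id_apply]
    rw [← map_smul]
    congr 1
    simp only [Pi.smul_apply, smul_smul, smul_eq_mul, smul_add]

lemma psi_apply (a : ℂ) (D : LL →ₗ[ℂ] LL) (v : Fin 3 → ℂ) :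
    psi a D v = (Wsub a D).mkQ
      (v 0 • ((0:LL), T (-1)) + v 1 • (T (-1), (0:LL)) + v 2 • ((1:LL), (0:LL))) := rfl

lemma c1_zero (a : ℂ) : c1 a 0 = 1 := by simp [c1, leg]
lemma c1_negone (a : ℂ) : c1 a (-1) = 0 := if_neg (by omega)
lemma c2_zero (a : ℂ) : c2 a 0 = 0 := by rw [c2, show (-1-0 : ℤ) = -1 from rfl, c1_negone]
lemma c2_negone (a : ℂ) : c2 a (-1) = 1 := by
  rw [c2, show (-1-(-1) : ℤ) = 0 from by ring, c1_zero]
lemma c0_negone : c0 (-1) = 1 := if_pos rfl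
lemma c0_zero : c0 0 = 0 := if_neg (by omega)

lemma lemh1 (a : ℂ) (D : LL →ₗ[ℂ] LL) (hD : ∀ n : ℤ, D (T n) = (n : ℂ) • T (n - 1)) :
    ((Wsub a D).liftQ (phi a) (hker a D hD)).comp (psi a D) = LinearMap.id := by
  apply LinearMap.ext
  intro v
  simp only [LinearMap.comp_apply, LinearMap.id_apply, psi, LinearMap.coe_mk,
    AddHom.coe_mk, Submodule.mkQ_apply, Submodule.liftQ_apply, map_add, map_smul]
  funext i
  fin_cases i
  · show v 0 * Lam c0 (T (-1)) + v 1 * Lam c0 (0:LL) + v 2 * Lam c0 (0:LL) = v 0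
    rw [Lam_T, map_zero, c0_negone]; ring
  · show v 0 * Lam (c2 a) (0:LL) + v 1 * Lam (c2 a) (T (-1)) + v 2 * Lam (c2 a) (1:LL)
      = v 1
    rw [Lam_T, map_zero, Lam_one, c2_negone, c2_zero]; ring
  · show v 0 * Lam (c1 a) (0:LL) + v 1 * Lam (c1 a) (T (-1)) + v 2 * Lam (c1 a) (1:LL)
      = v 2
    rw [Lam_T, map_zero, Lam_one, c1_negone, c1_zero]; ring

lemma lemh2 (a : ℂ) (D : LL →ₗ[ℂ] LL) (hD : ∀ n : ℤ, D (T n) = (n : ℂ) • T (n - 1)) :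
    (psi a D).comp ((Wsub a D).liftQ (phi a) (hker a D hD)) = LinearMap.id := by
  apply Submodule.linearMap_qext
  apply LinearMap.ext
  intro x
  simp only [LinearMap.comp_apply, Submodule.mkQ_apply, Submodule.liftQ_apply,
    LinearMap.id_apply, psi, LinearMap.coe_mk, AddHom.coe_mk]
  rw [Submodule.Quotient.eq]
  have hmem := neg_mem (add_mem (claimA a D hD x.1) (claimB a D hD x.2))
  convert hmem using 1
  rw [Prod.ext_iff]
  constructor
  · simp only [phi_apply0, phi_apply1, phi_apply2, Prod.fst_add, Prod.fst_sub,
      Prod.smul_fst, Prod.fst_neg, smul_zero]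
    module
  · simp only [phi_apply0, phi_apply1, phi_apply2, Prod.snd_add, Prod.snd_sub,
      Prod.smul_snd, Prod.snd_neg, smul_zero]
    module

noncomputable def eqv (a : ℂ) (D : LL →ₗ[ℂ] LL)
    (hD : ∀ n : ℤ, D (T n) = (n : ℂ) • T (n - 1)) :
    ((LL × LL) ⧸ Wsub a D) ≃ₗ[ℂ] (Fin 3 → ℂ) :=
  LinearEquiv.ofLinear ((Wsub a D).liftQ (phi a) (hker a D hD)) (psi a D)
    (lemh1 a D hD) (lemh2 a D hD)

theorem quad_center_dim_three' (a : ℂ)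
    (D : LaurentPolynomial ℂ →ₗ[ℂ] LaurentPolynomial ℂ)
    (hD : ∀ n : ℤ, D (T n) = (n : ℂ) • T (n - 1)) :
    Module.finrank ℂ ((LL × LL) ⧸ Wsub a D) = 3 ∧
    ∃ b : Module.Basis (Fin 3) ℂ ((LL × LL) ⧸ Wsub a D),
      b 0 = (Wsub a D).mkQ (0, T (-1)) ∧
      b 1 = (Wsub a D).mkQ (T (-1), 0) ∧
      b 2 = (Wsub a D).mkQ (1, 0) := by
  classical
  constructor
  · rw [LinearEquiv.finrank_eq (eqv a D hD), Module.finrank_fin_fun]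
  · refine ⟨Module.Basis.ofEquivFun (eqv a D hD), ?_, ?_, ?_⟩ <;>
    · simp only [Module.Basis.coe_ofEquivFun, eqv, LinearEquiv.ofLinear_symm_apply]
      rw [psi_apply]
      norm_num [Pi.single_apply, Fin.ext_iff, zero_smul, one_smul, zero_add, add_zero]

/-- for `a ≠ ±1`, the quotient `V = (L × L)/range(T)` is 3-dimensional
over `ℂ`, with basis `ω₀ = [X⁻¹u]`, `ω₁ = [X⁻¹]`, `ω₂ = [1]`. -/
theorem quad_center_dim_three (a : ℂ) (ha1 : a ≠ 1) (ha2 : a ≠ -1)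
    (D : LaurentPolynomial ℂ →ₗ[ℂ] LaurentPolynomial ℂ)
    (hD : ∀ n : ℤ, D (T n) = (n : ℂ) • T (n - 1)) :
    Module.finrank ℂ
        ((LaurentPolynomial ℂ × LaurentPolynomial ℂ) ⧸ LinearMap.range (Tquad a D)) = 3 ∧
    ∃ b : Module.Basis (Fin 3) ℂ
        ((LaurentPolynomial ℂ × LaurentPolynomial ℂ) ⧸ LinearMap.range (Tquad a D)),
      b 0 = (LinearMap.range (Tquad a D)).mkQ (0, T (-1)) ∧
      b 1 = (LinearMap.range (Tquad a D)).mkQ (T (-1), 0) ∧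
      b 2 = (LinearMap.range (Tquad a D)).mkQ (1, 0) :=
  quad_center_dim_three' a D hD
end

section
/- Let a ∈ ℂ. For every natural number k, the class of (X^k, 0) in V = (L × L)/range(T) equals (Q k).eval a times the class of (1, 0); that is, [x^k] = P_k(a)·ω₂ in A/∂A, where P_k is the k-th Legendre polynomial. -/
open LaurentPolynomial

lemma smul_eq_C_mul' (c : ℂ) (p : LaurentPolynomial ℂ) : c • p = C c * p := by
  rw [C_eq_algebraMap, ← Algebra.smul_def]

/-- Legendre reduction for positive powers: `[x^k] = P_k(a) * ω₂` in
`A/∂A`, where `Q` is the Legendre sequence given by the three-term recurrence. -/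
theorem legendre_reduction_pos (a : ℂ)
    (D : LaurentPolynomial ℂ →ₗ[ℂ] LaurentPolynomial ℂ)
    (hD : ∀ n : ℤ, D (T n) = (n : ℂ) • T (n - 1))
    (Q : ℕ → Polynomial ℂ) (hQ0 : Q 0 = 1) (hQ1 : Q 1 = Polynomial.X)
    (hQrec : ∀ n : ℕ, ((n : ℂ) + 2) • Q (n + 2) =
      (2 * (n : ℂ) + 3) • (Polynomial.X * Q (n + 1)) - ((n : ℂ) + 1) • Q n)
    (k : ℕ) :
    (LinearMap.range (Tquad a D)).mkQ (T (k : ℤ), 0) =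
      (Q k).eval a • (LinearMap.range (Tquad a D)).mkQ (1, 0) := by
  set q := (LinearMap.range (Tquad a D)).mkQ with hq
  have Tapp : ∀ fg : LaurentPolynomial ℂ × LaurentPolynomial ℂ,
      Tquad a D fg = ((T 2 - 2 * C a * T 1 + 1) * D fg.2 + (T 1 - C a) * fg.2, D fg.1) :=
    fun fg => rfl
  have hD1 : D 1 = 0 := by
    have := hD 0
    simpa using this
  have qzero : ∀ x, x ∈ LinearMap.range (Tquad a D) → q x = 0 := by
    intro x hx
    rw [hq, Submodule.mkQ_apply, Submodule.Quotient.mk_eq_zero]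
    exact hx
  -- base case k = 1
  have hbase1 : q (T 1, 0) = a • q (1, 0) := by
    have hmem : ((T 1 : LaurentPolynomial ℂ) - C a, (0 : LaurentPolynomial ℂ)) ∈
        LinearMap.range (Tquad a D) := by
      refine ⟨(0, 1), ?_⟩
      rw [Tapp]
      simp [hD1]
    have h0 := qzero _ hmem
    have hsplit : ((T 1 : LaurentPolynomial ℂ) - C a, (0 : LaurentPolynomial ℂ)) =
        (T 1, 0) - a • ((1 : LaurentPolynomial ℂ), (0 : LaurentPolynomial ℂ)) := by
      rw [Prod.ext_iff]
      constructor
      · simp [smul_eq_C_mul']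
      · simp
    rw [hsplit, map_sub, map_smul, sub_eq_zero] at h0
    exact h0
  -- key recurrence
  have key : ∀ n : ℕ, ((n : ℂ) + 2) • q (T ((n : ℤ) + 2), 0) =
      ((2 * (n : ℂ) + 3) * a) • q (T ((n : ℤ) + 1), 0) - ((n : ℂ) + 1) • q (T (n : ℤ), 0) := by
    intro n
    have hDn : D (T ((n : ℤ) + 1)) = ((n : ℂ) + 1) • T (n : ℤ) := by
      rw [hD]
      push_cast
      ring_nf
    have hmem : (((n : ℂ) + 2) • T ((n : ℤ) + 2)
        - ((2 * (n : ℂ) + 3) * a) • T ((n : ℤ) + 1) + ((n : ℂ) + 1) • T (n : ℤ),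
        (0 : LaurentPolynomial ℂ)) ∈ LinearMap.range (Tquad a D) := by
      refine ⟨(0, T ((n : ℤ) + 1)), ?_⟩
      rw [Tapp]
      simp only [map_zero, hDn]
      rw [Prod.ext_iff]
      refine ⟨?_, rfl⟩
      have e2 : (T ((n : ℤ) + 2) : LaurentPolynomial ℂ) = T (n : ℤ) * (T 1 * T 1) := by
        rw [← T_add, ← T_add]; ring_nf
      have e1 : (T ((n : ℤ) + 1) : LaurentPolynomial ℂ) = T (n : ℤ) * T 1 := by
        rw [← T_add]
      have e0 : (T (2 : ℤ) : LaurentPolynomial ℂ) = T 1 * T 1 := by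
        rw [← T_add]; norm_num
      simp only [smul_eq_C_mul', e2, e1, e0, map_add, map_mul, map_one, map_ofNat]
      ring
    have h0 := qzero _ hmem
    have hsplit : (((n : ℂ) + 2) • T ((n : ℤ) + 2)
        - ((2 * (n : ℂ) + 3) * a) • T ((n : ℤ) + 1) + ((n : ℂ) + 1) • T (n : ℤ),
        (0 : LaurentPolynomial ℂ)) =
        ((n : ℂ) + 2) • ((T ((n : ℤ) + 2) : LaurentPolynomial ℂ), (0 : LaurentPolynomial ℂ))
        - ((2 * (n : ℂ) + 3) * a) • ((T ((n : ℤ) + 1) : LaurentPolynomial ℂ), 0)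
        + ((n : ℂ) + 1) • ((T (n : ℤ) : LaurentPolynomial ℂ), 0) := by
      rw [Prod.ext_iff]; constructor <;> simp
    rw [hsplit, map_add, map_sub, map_smul, map_smul, map_smul] at h0
    have := sub_eq_zero.mpr h0.symm
    -- h0 : A - B + C = 0 where goal A = B - C
    linear_combination (norm := module) h0
  -- main induction
  induction k using Nat.twoStepInduction with
  | zero =>
    simp [hQ0]
  | one =>
    rw [hQ1]
    simpa using hbase1
  | more n ih1 ih2 =>
    have h2 : ((n : ℂ) + 2) ≠ 0 := by
      have : ((n + 2 : ℕ) : ℂ) ≠ 0 := Nat.cast_ne_zero.mpr (by omega)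
      push_cast at this
      exact this
    have hcast2 : ((n + 2 : ℕ) : ℤ) = (n : ℤ) + 2 := by push_cast; ring
    have hcast1 : ((n + 1 : ℕ) : ℤ) = (n : ℤ) + 1 := by push_cast; ring
    rw [hcast2]
    have hkey := key n
    rw [hcast1] at ih2
    rw [ih1, ih2] at hkey
    have hQe : ((n : ℂ) + 2) * (Q (n + 2)).eval a =
        (2 * (n : ℂ) + 3) * (a * (Q (n + 1)).eval a) - ((n : ℂ) + 1) * (Q n).eval a := by
      have := congrArg (Polynomial.eval a) (hQrec n)
      simpa [Polynomial.eval_smul, smul_eq_mul] using this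
    apply smul_right_injective _ h2
    dsimp only
    rw [hkey]
    rw [smul_smul, smul_smul, smul_smul, ← sub_smul, hQe]
    congr 1
    ring
end

section
/- Let a ∈ ℂ. For every natural number k ≥ 1, the class of (X^(−k), 0) in V = (L × L)/range(T) equals (Q (k−1)).eval a times the class of (X⁻¹, 0); that is, [x^(−k)] = P_{k−1}(a)·ω₁ in A/∂A, where P_{k−1} is the (k−1)-st Legendre polynomial. -/
open LaurentPolynomial

lemma smul_eq_Cmul (c : ℂ) (x : LaurentPolynomial ℂ) : c • x = C c * x := by
  rw [C_eq_algebraMap, ← Algebra.smul_def]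

/-- The basic recurrence coming from `∂(x^(-m-1) u) ∈ ∂A`. -/
lemma key_rec (a : ℂ)
    (D : LaurentPolynomial ℂ →ₗ[ℂ] LaurentPolynomial ℂ)
    (hD : ∀ n : ℤ, D (T n) = (n : ℂ) • T (n - 1)) (m : ℤ) :
    ((m:ℂ)+1) • (LinearMap.range (Tquad a D)).mkQ (T (-m-2), 0) =
      (a*(2*(m:ℂ)+1)) • (LinearMap.range (Tquad a D)).mkQ (T (-m-1), 0) -
      (m:ℂ) • (LinearMap.range (Tquad a D)).mkQ (T (-m), 0) := by
  set π := (LinearMap.range (Tquad a D)).mkQ with hπ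
  have h0 : π (Tquad a D (0, T (-m-1))) = 0 := by
    rw [hπ, Submodule.mkQ_apply, Submodule.Quotient.mk_eq_zero]
    exact ⟨_, rfl⟩
  have hel : ((m:ℂ)+1) • ((T (-m-2), 0) : LaurentPolynomial ℂ × LaurentPolynomial ℂ) =
      (a*(2*(m:ℂ)+1)) • (T (-m-1), 0) - (m:ℂ) • (T (-m), 0) - Tquad a D (0, T (-m-1)) := by
    have hD' := hD (-m-1)
    ext
    · simp only [Tquad, Tgen, LinearMap.coe_mk, AddHom.coe_mk, hD', Prod.smul_fst,
        Prod.fst_sub, smul_eq_Cmul]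
      have e1 : (T (-m) : LaurentPolynomial ℂ) = T (-m-1) * T 1 := by rw [← T_add]; ring_nf
      have e2 : (T (-m-1) : LaurentPolynomial ℂ) = T (-m-2) * T 1 := by rw [← T_add]; ring_nf
      have e3 : (T 2 : LaurentPolynomial ℂ) = T 1 * T 1 := by rw [← T_add]; norm_num
      have e0 : (-m-1-1 : ℤ) = -m-2 := by ring
      rw [e0, e1, e2, e3]
      push_cast
      simp only [map_add, map_sub, map_neg, map_one, map_mul, map_ofNat]
      ring
    · simp [Tquad, Tgen]
  calc ((m:ℂ)+1) • π (T (-m-2), 0) = π (((m:ℂ)+1) • (T (-m-2), 0)) := (map_smul π _ _).symm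
    _ = _ := by rw [hel, map_sub, map_sub, h0, sub_zero, map_smul, map_smul]

/-- Legendre reduction for negative powers: `[x^(-k)] = P_(k-1)(a) * ω₁`
in `A/∂A` for `k ≥ 1`. -/
theorem legendre_reduction_neg (a : ℂ)
    (D : LaurentPolynomial ℂ →ₗ[ℂ] LaurentPolynomial ℂ)
    (hD : ∀ n : ℤ, D (T n) = (n : ℂ) • T (n - 1))
    (Q : ℕ → Polynomial ℂ) (hQ0 : Q 0 = 1) (hQ1 : Q 1 = Polynomial.X)
    (hQrec : ∀ n : ℕ, ((n : ℂ) + 2) • Q (n + 2) =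
      (2 * (n : ℂ) + 3) • (Polynomial.X * Q (n + 1)) - ((n : ℂ) + 1) • Q n)
    (k : ℕ) (hk : 1 ≤ k) :
    (LinearMap.range (Tquad a D)).mkQ (T (-(k : ℤ)), 0) =
      (Q (k - 1)).eval a • (LinearMap.range (Tquad a D)).mkQ (T (-1), 0) := by
  suffices H : ∀ n : ℕ,
      ((LinearMap.range (Tquad a D)).mkQ (T (-((n:ℤ)+1)), 0) =
        (Q n).eval a • (LinearMap.range (Tquad a D)).mkQ (T (-1), 0)) ∧
      ((LinearMap.range (Tquad a D)).mkQ (T (-((n:ℤ)+2)), 0) =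
        (Q (n+1)).eval a • (LinearMap.range (Tquad a D)).mkQ (T (-1), 0)) by
    obtain ⟨m, rfl⟩ := Nat.exists_eq_add_of_le hk
    have h := (H m).1
    have e : (-((m:ℤ)+1)) = -((1+m : ℕ) : ℤ) := by push_cast; ring
    rw [e] at h
    simpa [Nat.add_sub_cancel_left] using h
  intro n
  induction n with
  | zero =>
    constructor
    · norm_num [hQ0]
    · have h := key_rec a D hD 0
      simp only [Submodule.mkQ_apply] at h ⊢
      norm_num at h ⊢
      rw [h, hQ1]
      norm_num
  | succ n ih =>
    refine ⟨by push_cast; exact_mod_cast ih.2, ?_⟩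
    have hc : ((n:ℂ)+2) ≠ 0 := by
      have h2 : ((n+2 : ℕ) : ℂ) ≠ 0 := Nat.cast_ne_zero.mpr (by omega)
      push_cast at h2; exact h2
    have hkey := key_rec a D hD ((n:ℤ)+1)
    have e1 : (-((n:ℤ)+1)-2) = -((n:ℤ)+1+2) := by ring
    have e2 : (-((n:ℤ)+1)-1) = -((n:ℤ)+1+1) := by ring
    rw [e1, e2] at hkey
    have e3 : (-((n:ℤ)+1+1)) = -((n:ℤ)+2) := by ring
    rw [e3] at hkey
    push_cast at hkey ⊢
    have hQ := congrArg (Polynomial.eval a) (hQrec n)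
    simp only [Polynomial.eval_smul, Polynomial.eval_sub, Polynomial.eval_mul,
      Polynomial.eval_X, smul_eq_mul] at hQ
    refine smul_right_injective _ hc ?_
    dsimp only
    have hcoef : ((n:ℂ)+1+1) = (n:ℂ)+2 := by ring
    rw [hcoef] at hkey
    rw [hkey]
    have i1 := ih.1
    have i2 := ih.2
    push_cast at i1 i2
    rw [i1, i2, smul_smul, smul_smul, smul_smul, ← sub_smul]
    congr 1
    have hidx : n + 1 + 1 = n + 2 := rfl
    rw [hidx]
    linear_combination -hQ
end

section
/- Let a ∈ ℝ and let F ∈ ℝ⟦Z⟧ be the formal power series whose k-th coefficient is (Q k).eval a. Then F satisfies the first-order differential equation (1 − 2aZ + Z²)·F′ + (Z − a)·F = 0 in ℝ⟦Z⟧, where F′ denotes the formal derivative of F. -/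
/-- the Legendre generating function `F = Σ P_k(a) Z^k` satisfies the
first-order ODE `(1 - 2aZ + Z^2) * F' + (Z - a) * F = 0` in `ℝ⟦Z⟧`. -/
theorem legendre_genfun_ODE (a : ℝ)
    (Q : ℕ → Polynomial ℝ) (hQ0 : Q 0 = 1) (hQ1 : Q 1 = Polynomial.X)
    (hQrec : ∀ n : ℕ, ((n : ℝ) + 2) • Q (n + 2) =
      (2 * (n : ℝ) + 3) • (Polynomial.X * Q (n + 1)) - ((n : ℝ) + 1) • Q n) :
    (1 - PowerSeries.C (2 * a) * PowerSeries.X + PowerSeries.X ^ 2) *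
        (PowerSeries.derivative ℝ (PowerSeries.mk fun k => (Q k).eval a)) +
      (PowerSeries.X - PowerSeries.C a) * (PowerSeries.mk fun k => (Q k).eval a) = 0 := by
  set p : ℕ → ℝ := fun k => (Q k).eval a with hp
  have hrec : ∀ n : ℕ, ((n : ℝ) + 2) * p (n + 2) =
      (2 * (n : ℝ) + 3) * (a * p (n + 1)) - ((n : ℝ) + 1) * p n := by
    intro n
    have := congrArg (Polynomial.eval a) (hQrec n)
    simpa [Polynomial.eval_smul, smul_eq_mul, mul_assoc] using this
  have hp0 : p 0 = 1 := by simp [hp, hQ0]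
  have hp1 : p 1 = a := by simp [hp, hQ1]
  set F : PowerSeries ℝ := PowerSeries.mk p with hF
  have hD : ∀ n : ℕ, PowerSeries.coeff n (PowerSeries.derivative ℝ F) =
      p (n + 1) * ((n : ℝ) + 1) := by
    intro n
    rw [PowerSeries.coeff_derivative]
    simp [hF]
  ext n
  rw [add_mul, sub_mul, sub_mul, one_mul, map_add, map_add, map_sub, map_sub, map_zero]
  match n with
  | 0 =>
      simp only [one_mul, mul_assoc]
      rw [PowerSeries.coeff_C_mul]
      simp only [PowerSeries.coeff_zero_X_mul, mul_zero, sub_zero]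
      have : PowerSeries.coeff 0 (PowerSeries.X ^ 2 * PowerSeries.derivative ℝ F) = 0 := by
        rw [pow_two, mul_assoc, PowerSeries.coeff_zero_X_mul]
      rw [this, add_zero, hD 0]
      simp [hF, hp1, hp0]
  | 1 =>
      simp only [one_mul, mul_assoc]
      rw [PowerSeries.coeff_C_mul, PowerSeries.coeff_succ_X_mul]
      have h2 : PowerSeries.coeff 1 (PowerSeries.X ^ 2 * PowerSeries.derivative ℝ F) = 0 := by
        rw [pow_two, mul_assoc, PowerSeries.coeff_succ_X_mul, PowerSeries.coeff_zero_X_mul]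
      rw [h2, add_zero, hD 1, hD 0, PowerSeries.coeff_succ_X_mul,
        PowerSeries.coeff_C_mul]
      simp only [hF, PowerSeries.coeff_mk, Nat.cast_zero, Nat.cast_one]
      have := hrec 0
      simp only [Nat.cast_zero] at this
      rw [hp0, hp1] at this
      rw [show p 0 = 1 from hp0, show p 1 = a from hp1]
      nlinarith [this]
  | (k + 2) =>
      rw [mul_assoc, PowerSeries.coeff_C_mul, PowerSeries.coeff_succ_X_mul]
      have h2 : PowerSeries.coeff (k + 2) (PowerSeries.X ^ 2 * PowerSeries.derivative ℝ F) =
          PowerSeries.coeff k (PowerSeries.derivative ℝ F) := by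
        rw [pow_two, mul_assoc, PowerSeries.coeff_succ_X_mul, PowerSeries.coeff_succ_X_mul]
      rw [h2, hD (k + 2), hD (k + 1), hD k, PowerSeries.coeff_succ_X_mul,
        PowerSeries.coeff_C_mul]
      simp only [hF, PowerSeries.coeff_mk]
      have := hrec (k + 1)
      push_cast at this ⊢
      nlinarith [this]
end

section
/- Let Q : ℕ → ℝ[X] be the Legendre polynomials. For every natural number n ≥ 3, the following identity holds in ℝ[X]: (2n+1) · ( n²·Q(n+1) − (4n² − 3n + 1)·X·Q(n) + ((2n² − 3n + 2) + 2(n−1)(2n−1)·X²)·Q(n−1) − (n−1)(4n−5)·X·Q(n−2) + (n−1)(n−2)·Q(n−3) ) = Q(n−1) − Q(n+1). (This is the key identity showing that the reduced cross-cocycle g_n equals the Legendre antiderivative (P_{n−1} − P_{n+1})/(2n+1).) -/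
open Polynomial

/-- the key identity `(2n+1) * g_n = Q_(n-1) - Q_(n+1)` in `ℝ[X]` for
the reduced cross-cocycle `g_n`, valid for `n ≥ 3`. -/
theorem reduced_cross_cocycle_identity
    (Q : ℕ → Polynomial ℝ) (hQ0 : Q 0 = 1) (hQ1 : Q 1 = Polynomial.X)
    (hQrec : ∀ n : ℕ, ((n : ℝ) + 2) • Q (n + 2) =
      (2 * (n : ℝ) + 3) • (Polynomial.X * Q (n + 1)) - ((n : ℝ) + 1) • Q n)
    (n : ℕ) (hn : 3 ≤ n) :
    C (2 * (n : ℝ) + 1) *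
        (C ((n : ℝ) ^ 2) * Q (n + 1) -
          C (4 * (n : ℝ) ^ 2 - 3 * (n : ℝ) + 1) * X * Q n +
          (C (2 * (n : ℝ) ^ 2 - 3 * (n : ℝ) + 2) +
            C (2 * ((n : ℝ) - 1) * (2 * (n : ℝ) - 1)) * X ^ 2) * Q (n - 1) -
          C (((n : ℝ) - 1) * (4 * (n : ℝ) - 5)) * X * Q (n - 2) +
          C (((n : ℝ) - 1) * ((n : ℝ) - 2)) * Q (n - 3)) =
      Q (n - 1) - Q (n + 1) := by
  obtain ⟨m, rfl⟩ := Nat.exists_eq_add_of_le hn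
  have e1 : 3 + m + 1 = m + 2 + 2 := by omega
  have e0 : 3 + m = m + 3 := by omega
  have em1 : 3 + m - 1 = m + 2 := by omega
  have em2 : 3 + m - 2 = m + 1 := by omega
  have em3 : 3 + m - 3 = m := by omega
  rw [e1, em1, em2, em3, e0]
  have h0 := hQrec m
  have h1 := hQrec (m + 1)
  have h2 := hQrec (m + 2)
  simp only [Polynomial.smul_eq_C_mul] at h0 h1 h2
  push_cast at h0 h1 h2 ⊢
  simp only [map_add, map_mul, map_sub, map_one, map_pow, map_ofNat, map_neg,
    Polynomial.C_1] at h0 h1 h2 ⊢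
  linear_combination (2 * (C (m : ℝ) + 3) ^ 2 - (C (m : ℝ) + 3) + 1) * h2
    + (-2 * (2 * (C (m : ℝ) + 3) + 1) * ((C (m : ℝ) + 3) - 1) * X) * h1
    + ((2 * (C (m : ℝ) + 3) + 1) * ((C (m : ℝ) + 3) - 1)) * h0
end

section
/- Let a ∈ ℂ. In V = (L × L)/range(T), the class of (P·(−a·X⁻² + 2·X⁻³), 0) equals the class of (X⁻¹, 0) minus a times the class of (1, 0). That is, the boundary cross-cocycle value satisfies ψ(e₁, f₋₁) = ω₁ − a·ω₂. -/
open LaurentPolynomial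

/-- the boundary cross-cocycle value
`ψ(e₁, f₋₁) = [P * (-aX⁻² + 2X⁻³)] = ω₁ - aω₂` in `V = (L × L)/range(T)`. -/
theorem cross_cocycle_boundary (a : ℂ)
    (D : LaurentPolynomial ℂ →ₗ[ℂ] LaurentPolynomial ℂ)
    (hD : ∀ n : ℤ, D (T n) = (n : ℂ) • T (n - 1)) :
    (LinearMap.range (Tquad a D)).mkQ
        ((T 2 - 2 * C a * T 1 + 1) * (-(C a) * T (-2) + 2 * T (-3)), 0) =
      (LinearMap.range (Tquad a D)).mkQ (T (-1), 0) -
        a • (LinearMap.range (Tquad a D)).mkQ (1, 0) := by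
  have hC : ∀ (c : ℂ) (f : LaurentPolynomial ℂ), c • f = C c * f := fun c f => by
    rw [C_eq_algebraMap, ← Algebra.smul_def]
  rw [← map_smul, ← map_sub, ← sub_eq_zero, ← map_sub, Submodule.mkQ_apply,
    Submodule.Quotient.mk_eq_zero]
  refine ⟨(0, (2*a) • T (-1) - T (-2)), ?_⟩
  have key : (T 2 - 2 * C a * T 1 + 1) * D ((2*a) • T (-1) - T (-2))
      + (T 1 - C a) * ((2*a) • T (-1) - T (-2))
      = (T 2 - 2 * C a * T 1 + 1) * (-(C a) * T (-2) + 2 * T (-3))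
        - (T (-1) - a • (1 : LaurentPolynomial ℂ)) := by
    rw [map_sub, map_smul, hD, hD]
    have hT : (T 1 * T (-3) : LaurentPolynomial ℂ) = T (-2) := by
      rw [← T_add]; norm_num
    have hC2 : (C 2 : LaurentPolynomial ℂ) = 2 := by rw [C_eq_algebraMap, map_ofNat]
    simp only [hC, map_mul, map_neg, map_one, map_ofNat, Int.cast_neg, Int.cast_one,
      Int.cast_ofNat]
    have h1 : (T 2 * T (-2) : LaurentPolynomial ℂ) = 1 := by
      rw [← T_add]; norm_num [T_zero]
    have h2 : (T 1 * T (-1) : LaurentPolynomial ℂ) = 1 := by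
      rw [← T_add]; norm_num [T_zero]
    have h3 : (T 1 * T (-2) : LaurentPolynomial ℂ) = T (-1) := by
      rw [← T_add]; norm_num
    ring_nf
    linear_combination (-(C a)) * h1 + (2 * C a) * h2 + (2 * C a ^ 2 - 1) * h3
  show ((T 2 - 2 * C a * T 1 + 1) * D ((2*a) • T (-1) - T (-2))
      + (T 1 - C a) * ((2*a) • T (-1) - T (-2)), D 0) = _
  rw [key, map_zero]
  refine Prod.ext rfl ?_
  simp
end

section
/- Let Q : ℕ → ℝ[X] be the Legendre polynomials. For every natural number k, the interval integral of the (2k+1)-st Legendre polynomial over [0, 1] satisfies: ∫_0^1 (Q (2k+1)).eval t dt = (−1)^k · (2k choose k) / (2·(k+1)·4^k). -/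
/-- `∫_0^1 P_(2k+1)(t) dt = (-1)^k * C(2k, k) / (2(k+1) 4^k)`. -/
theorem legendre_odd_integral
    (Q : ℕ → Polynomial ℝ) (hQ0 : Q 0 = 1) (hQ1 : Q 1 = Polynomial.X)
    (hQrec : ∀ n : ℕ, ((n : ℝ) + 2) • Q (n + 2) =
      (2 * (n : ℝ) + 3) • (Polynomial.X * Q (n + 1)) - ((n : ℝ) + 1) • Q n)
    (k : ℕ) :
    ∫ t in (0 : ℝ)..1, (Q (2 * k + 1)).eval t =
      (-1) ^ k * (Nat.choose (2 * k) k : ℝ) / (2 * ((k : ℝ) + 1) * 4 ^ k) := by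
  open Polynomial in
  -- recurrence in `C` form
  have rec' : ∀ n : ℕ, (C (n:ℝ) + 2) * Q (n+2) = (2 * C (n:ℝ) + 3) * (X * Q (n+1)) - (C (n:ℝ) + 1) * Q n := by
    intro n
    have h := hQrec n
    simp only [smul_eq_C_mul, map_add, map_mul, map_ofNat, map_one] at h
    exact h
  have drec : ∀ n : ℕ, (C (n:ℝ) + 2) * derivative (Q (n+2)) =
      (2 * C (n:ℝ) + 3) * (Q (n+1) + X * derivative (Q (n+1))) - (C (n:ℝ) + 1) * derivative (Q n) := by
    intro n
    have h := congrArg derivative (rec' n)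
    simp only [derivative_sub, derivative_mul, derivative_add, derivative_C, derivative_X,
      derivative_ofNat, derivative_one, map_mul, map_ofNat] at h ⊢
    ring_nf at h ⊢
    linear_combination h
  -- the two classical derivative identities, by joint induction
  have HG : ∀ n : ℕ, (derivative (Q (n+1)) - X * derivative (Q n) = (C (n:ℝ) + 1) * Q n) ∧
      (X * derivative (Q (n+1)) - derivative (Q n) = (C (n:ℝ) + 1) * Q (n+1)) := by
    intro n
    induction n with
    | zero => simp [hQ0, hQ1]
    | succ n ih =>
      obtain ⟨Hn, Gn⟩ := ih
      have hc : (C (n:ℝ) + 2 : ℝ[X]) ≠ 0 := by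
        have : (C (n:ℝ) + 2 : ℝ[X]) = C ((n:ℝ) + 2) := by simp [map_add, map_ofNat]
        rw [this, Ne, C_eq_zero]
        positivity
      have hcast : (C ((n+1:ℕ):ℝ) : ℝ[X]) + 1 = C (n:ℝ) + 2 := by
        push_cast
        simp [map_add, map_one]
        ring
      constructor
      · rw [hcast]
        apply mul_left_cancel₀ hc
        linear_combination drec n + (C (n:ℝ) + 1) * Gn
      · rw [hcast]
        apply mul_left_cancel₀ hc
        linear_combination X * drec n - (C (n:ℝ) + 2) * rec' n + (2 * C (n:ℝ) + 3) * X * Gn - (C (n:ℝ) + 2) * Hn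
  -- Bonnet's recursion
  have Bonnet : ∀ n : ℕ, derivative (Q (n+2)) - derivative (Q n) = (2 * C (n:ℝ) + 3) * Q (n+1) := by
    intro n
    have h1 := (HG (n+1)).1
    have h2 := (HG n).2
    have hcast : (C ((n+1:ℕ):ℝ) : ℝ[X]) = C (n:ℝ) + 1 := by
      push_cast
      simp [map_add, map_one]
    rw [hcast] at h1
    have hidx : n + 1 + 1 = n + 2 := rfl
    rw [hidx] at h1
    linear_combination h1 + h2
  -- values at 1
  have hev1 : ∀ n : ℕ, (Q n).eval 1 = 1 ∧ (Q (n+1)).eval 1 = 1 := by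
    intro n
    induction n with
    | zero => simp [hQ0, hQ1]
    | succ n ih =>
      obtain ⟨h0, h1⟩ := ih
      refine ⟨h1, ?_⟩
      have h := congrArg (eval 1) (hQrec n)
      simp only [eval_smul, eval_sub, eval_mul, eval_X, h0, h1, smul_eq_mul] at h
      have hn : ((n:ℝ) + 2) ≠ 0 := by positivity
      field_simp at h
      nlinarith [h]
  -- values at 0 for even indices
  have hev0 : ∀ m : ℕ, (Q (2*m)).eval 0 = (-1)^m * ((2*m).choose m : ℝ) / 4^m := by
    intro m
    induction m with
    | zero => simp [hQ0]
    | succ m ih =>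
      have h := congrArg (eval 0) (hQrec (2*m))
      simp only [eval_smul, eval_sub, eval_mul, eval_X, smul_eq_mul, zero_mul, mul_zero] at h
      have hidx : 2 * m + 2 = 2 * (m+1) := by ring
      rw [hidx, ih] at h
      push_cast at h
      have hch : ((m:ℝ)+1) * ((2*(m+1)).choose (m+1) : ℝ) = 2 * (2*(m:ℝ)+1) * ((2*m).choose m : ℝ) := by
        have := Nat.succ_mul_centralBinom_succ m
        have h2 : ((m+1) * Nat.centralBinom (m+1) : ℝ) = (2 * (2*m+1) * Nat.centralBinom m : ℝ) := by
          exact_mod_cast congrArg (Nat.cast : ℕ → ℝ) this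
        simpa [Nat.centralBinom] using h2
      have h4 : (4:ℝ)^m ≠ 0 := by positivity
      have hk2 : (2*(m:ℝ)+2) ≠ 0 := by positivity
      have := h
      field_simp at this ⊢
      have hm1 : ((m:ℝ)+1) ≠ 0 := by positivity
      apply mul_left_cancel₀ hm1
      linear_combination 2*this + (-1)^m*hch
  -- integral of a derivative of a polynomial
  have intp : ∀ p : ℝ[X], ∫ t in (0:ℝ)..1, (derivative p).eval t = p.eval 1 - p.eval 0 := by
    intro p
    refine intervalIntegral.integral_eq_sub_of_hasDerivAt (f := fun t => p.eval t)
      (fun x _ => p.hasDerivAt x) ?_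
    exact (Polynomial.continuous_aeval (derivative p)).intervalIntegrable 0 1
  -- integrate Bonnet at n = 2k
  have e1 : ∀ t : ℝ, (derivative (Q (2*k+2) - Q (2*k))).eval t = (4*(k:ℝ)+3) * (Q (2*k+1)).eval t := by
    intro t
    rw [derivative_sub]
    have := congrArg (eval t) (Bonnet (2*k))
    simp only [eval_sub, eval_mul, eval_add, eval_ofNat, eval_C, eval_one, eval_mul, map_mul] at this ⊢
    push_cast at this
    linarith [this]
  have h2 : (4*(k:ℝ)+3) * ∫ t in (0:ℝ)..1, (Q (2*k+1)).eval t
      = (Q (2*k+2)).eval 1 - (Q (2*k)).eval 1 - ((Q (2*k+2)).eval 0 - (Q (2*k)).eval 0) := by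
    rw [← intervalIntegral.integral_const_mul]
    have : ∫ t in (0:ℝ)..1, (4*(k:ℝ)+3) * (Q (2*k+1)).eval t
        = ∫ t in (0:ℝ)..1, (derivative (Q (2*k+2) - Q (2*k))).eval t := by
      apply intervalIntegral.integral_congr
      intro t _
      exact (e1 t).symm
    rw [this, intp]
    simp [eval_sub]
  -- plug in the boundary values
  have hidx2 : 2 * k + 2 = 2 * (k+1) := by ring
  rw [(hev1 (2*k+2)).1, (hev1 (2*k)).1, hidx2, hev0 (k+1), hev0 k] at h2
  have hch : ((k:ℝ)+1) * ((2*(k+1)).choose (k+1) : ℝ) = 2 * (2*(k:ℝ)+1) * ((2*k).choose k : ℝ) := by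
    have := Nat.succ_mul_centralBinom_succ k
    have h2' : ((k+1) * Nat.centralBinom (k+1) : ℝ) = (2 * (2*k+1) * Nat.centralBinom k : ℝ) := by
      exact_mod_cast congrArg (Nat.cast : ℕ → ℝ) this
    simpa [Nat.centralBinom] using h2'
  have h4 : (4:ℝ)^k ≠ 0 := by positivity
  have hk1 : ((k:ℝ)+1) ≠ 0 := by positivity
  have hk43 : (4*(k:ℝ)+3) ≠ 0 := by positivity
  have htgt : (4*(k:ℝ)+3) * ((-1)^k * ((2*k).choose k : ℝ) / (2*((k:ℝ)+1)*4^k))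
      = ((-1)^k * ((2*k).choose k : ℝ) / 4^k) - ((-1)^(k+1) * ((2*(k+1)).choose (k+1) : ℝ) / 4^(k+1)) := by
    field_simp
    linear_combination (-2 : ℝ) * ((-1:ℝ))^k * (4:ℝ)^k * hch
  have hI : (4*(k:ℝ)+3) * ∫ t in (0:ℝ)..1, (Q (2*k+1)).eval t
      = ((-1)^k * ((2*k).choose k : ℝ) / 4^k) - ((-1)^(k+1) * ((2*(k+1)).choose (k+1) : ℝ) / 4^(k+1)) := by
    linarith [h2]
  have := mul_left_cancel₀ hk43 (hI.trans htgt.symm)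
  push_cast at this
  linarith [this]
end

section
/- Let a ∈ ℝ and let F ∈ ℝ⟦Z⟧ be the formal power series whose (2k+1)-st coefficient is (Q k).eval a for each natural number k and whose other coefficients vanish (i.e. F = Σ_{k≥0} P_k(a)·Z^(2k+1)). Then F satisfies the differential equation (Z − 2aZ³ + Z⁵)·F′ + (Z⁴ − 1)·F = 0 in ℝ⟦Z⟧, where F′ denotes the formal derivative. -/
/-- the quartic odd-sector generating function `F = Σ P_k(a) Z^(2k+1)`
satisfies `(Z - 2aZ³ + Z⁵) * F' + (Z⁴ - 1) * F = 0` in `ℝ⟦Z⟧`. -/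
theorem quartic_genfun_ODE (a : ℝ)
    (Q : ℕ → Polynomial ℝ) (hQ0 : Q 0 = 1) (hQ1 : Q 1 = Polynomial.X)
    (hQrec : ∀ n : ℕ, ((n : ℝ) + 2) • Q (n + 2) =
      (2 * (n : ℝ) + 3) • (Polynomial.X * Q (n + 1)) - ((n : ℝ) + 1) • Q n)
    (F : PowerSeries ℝ)
    (hFodd : ∀ k : ℕ, PowerSeries.coeff (2 * k + 1) F = (Q k).eval a)
    (hFeven : ∀ k : ℕ, PowerSeries.coeff (2 * k) F = 0) :
    (PowerSeries.X - PowerSeries.C (2 * a) * PowerSeries.X ^ 3 + PowerSeries.X ^ 5) *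
        (PowerSeries.derivative ℝ F) +
      (PowerSeries.X ^ 4 - 1) * F = 0 := by
  set p : ℕ → ℝ := fun k => (Q k).eval a with hp
  have hrec : ∀ n : ℕ, ((n : ℝ) + 2) * p (n + 2)
      = (2 * (n : ℝ) + 3) * (a * p (n + 1)) - ((n : ℝ) + 1) * p n := by
    intro n
    have := congrArg (Polynomial.eval a) (hQrec n)
    simpa [hp, smul_eq_mul] using this
  have hFe : ∀ n : ℕ, n % 2 = 0 → PowerSeries.coeff n F = 0 := by
    intro n hn
    obtain ⟨k, rfl⟩ : ∃ k, n = 2 * k := ⟨n / 2, by omega⟩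
    exact hFeven k
  have hFo : ∀ n k : ℕ, n = 2 * k + 1 → PowerSeries.coeff n F = p k := by
    intro n k h; subst h; exact hFodd k
  apply PowerSeries.ext
  intro n
  have expand : (PowerSeries.X - PowerSeries.C (2 * a) * PowerSeries.X ^ 3 + PowerSeries.X ^ 5) *
        (PowerSeries.derivative ℝ F) + (PowerSeries.X ^ 4 - 1) * F
      = PowerSeries.X ^ 1 * (PowerSeries.derivative ℝ F)
        - PowerSeries.C (2 * a) * (PowerSeries.X ^ 3 * (PowerSeries.derivative ℝ F))
        + PowerSeries.X ^ 5 * (PowerSeries.derivative ℝ F)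
        + PowerSeries.X ^ 4 * F - F := by ring
  rw [expand]
  simp only [map_add, map_sub, PowerSeries.coeff_C_mul, PowerSeries.coeff_X_pow_mul',
    PowerSeries.coeff_derivative, map_zero]
  rcases lt_or_ge n 5 with h | h
  · interval_cases n <;>
      norm_num [hFe 0 rfl, hFe 2 rfl, hFe 4 rfl, hFo 1 0 rfl, hFo 3 1 rfl, hp, hQ0, hQ1] <;>
      ring
  · rcases Nat.even_or_odd n with he | ho
    · obtain ⟨m, hm⟩ := he
      obtain ⟨k, rfl⟩ : ∃ k, n = 2 * k + 6 := ⟨(n - 6) / 2, by omega⟩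
      have e1 : 2 * k + 6 - 1 + 1 = 2 * (k + 3) := by omega
      have e3 : 2 * k + 6 - 3 + 1 = 2 * (k + 2) := by omega
      have e5 : 2 * k + 6 - 5 + 1 = 2 * (k + 1) := by omega
      have e4 : 2 * k + 6 - 4 = 2 * (k + 1) := by omega
      rw [if_pos (by omega), if_pos (by omega), if_pos (by omega), if_pos (by omega),
        e1, e3, e5, e4, hFeven, hFeven, hFeven, hFe (2 * k + 6) (by omega)]
      ring
    · obtain ⟨m, hm⟩ := ho
      obtain ⟨k, rfl⟩ : ∃ k, n = 2 * k + 5 := ⟨(n - 5) / 2, by omega⟩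
      have e1 : 2 * k + 5 - 1 + 1 = 2 * (k + 2) + 1 := by omega
      have e3 : 2 * k + 5 - 3 + 1 = 2 * (k + 1) + 1 := by omega
      have e5 : 2 * k + 5 - 5 + 1 = 2 * k + 1 := by omega
      have e4 : 2 * k + 5 - 4 = 2 * k + 1 := by omega
      rw [if_pos (by omega), if_pos (by omega), if_pos (by omega), if_pos (by omega)]
      simp only [show 2 * k + 5 - 1 = 2 * k + 4 from by omega,
        show 2 * k + 5 - 3 = 2 * k + 2 from by omega,
        show 2 * k + 5 - 5 = 2 * k from by omega,
        show 2 * k + 5 - 4 = 2 * k + 1 from by omega]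
      rw [hFo (2 * k + 4 + 1) (k + 2) (by omega), hFo (2 * k + 2 + 1) (k + 1) (by omega),
        hFo (2 * k + 1) k (by omega)]
      have hr := hrec k
      push_cast
      push_cast at hr
      nlinarith [hr]
end
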